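/- Let D be a nonempty finite set, let f, ucb, lcb : D → ℝ satisfy lcb(x) ≤ f(x) ≤ ucb(x) for all x ∈ D, and let Δ : D → Set D assign to each x a nonempty finite set of 'perturbed' points. Define g(x) = min_{x' ∈ Δ(x)} f(x'). Suppose x̃ maximizes x ↦ min_{x' ∈ Δ(x)} ucb(x') over D, and δ̃ ∈ Δ(x̃) minimizes lcb over Δ(x̃). Then max_{x ∈ D} g(x) − g(x̃) ≤ ucb(δ̃) − lcb(δ̃). -/
import Mathlib

open Finset

/-- StableOpt per-round regret bound: if `ucb`/`lcb` sandwich `f`, `x̃` maximizes the robust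
upper confidence bound and `δ̃ ∈ Δ x̃` minimizes `lcb` over `Δ x̃`, then the ε-regret of `x̃`
is bounded by the confidence width at `δ̃`. -/
theorem stableopt_per_round_regret
    {D : Type*} [Fintype D] [Nonempty D]
    (f ucb lcb : D → ℝ)
    (hconf : ∀ x, lcb x ≤ f x ∧ f x ≤ ucb x)
    (Δ : D → Finset D) (hΔ : ∀ x, (Δ x).Nonempty)
    (xt δt : D)
    (hxt : ∀ x : D, (Δ x).inf' (hΔ x) ucb ≤ (Δ xt).inf' (hΔ xt) ucb)
    (hδmem : δt ∈ Δ xt)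
    (hδt : ∀ y ∈ Δ xt, lcb δt ≤ lcb y) :
    Finset.univ.sup' Finset.univ_nonempty (fun x => (Δ x).inf' (hΔ x) f)
      - (Δ xt).inf' (hΔ xt) f ≤ ucb δt - lcb δt := by
  have h1 : Finset.univ.sup' Finset.univ_nonempty (fun x => (Δ x).inf' (hΔ x) f)
      ≤ ucb δt := by
    apply Finset.sup'_le
    intro x _
    calc (Δ x).inf' (hΔ x) f ≤ (Δ x).inf' (hΔ x) ucb :=
          Finset.le_inf' _ _ (fun y hy => le_trans (Finset.inf'_le _ hy) (hconf y).2)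
      _ ≤ (Δ xt).inf' (hΔ xt) ucb := hxt x
      _ ≤ ucb δt := Finset.inf'_le _ hδmem
  have h2 : lcb δt ≤ (Δ xt).inf' (hΔ xt) f := by
    apply Finset.le_inf'
    intro y hy
    exact le_trans (hδt y hy) (hconf y).1
  linarith
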